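/- arXiv:2605.15001 — 11 statements merged into one kernel-verified Lean document; each statement's English description precedes it below -/
import Mathlib

section
/- Soundness of the dRL sequential composition refinement axiom (;_≤): let α, β, γ, δ be relations on states and let s be a state. If α refines γ at s (i.e., ∀ t, α s t → γ s t), and for every state t reachable from s by α the relation β refines δ at t (i.e., ∀ t, α s t → ∀ u, β t u → δ t u), then the composition α;β refines γ;δ at s, i.e., ∀ u, (Relation.Comp α β) s u → (Relation.Comp γ δ) s u. -/
theorem drl_seq_refinement_sound {V : Type*}
    (α β γ δ : (V → ℝ) → (V → ℝ) → Prop) (s : V → ℝ)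
    (h1 : ∀ t, α s t → γ s t)
    (h2 : ∀ t, α s t → ∀ u, β t u → δ t u) :
    ∀ u, Relation.Comp α β s u → Relation.Comp γ δ s u := by
  rintro u ⟨t, hat, hbt⟩
  exact ⟨t, h1 t hat, h2 t hat u hbt⟩
end

section
/- Soundness of the dRL left loop refinement axiom (loop_l): let α, β be relations on states and let s be a state. If for every state t reachable from s by the loop α* the composition α;β refines β at t (i.e., ∀ t, Relation.ReflTransGen α s t → ∀ u, (Relation.Comp α β) t u → β t u), then the composition α*;β refines β at s, i.e., ∀ u, (Relation.Comp (Relation.ReflTransGen α) β) s u → β s u. -/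
theorem drl_loop_left_sound {V : Type*}
    (α β : (V → ℝ) → (V → ℝ) → Prop) (s : V → ℝ)
    (h : ∀ t, Relation.ReflTransGen α s t → ∀ u, Relation.Comp α β t u → β t u) :
    ∀ u, Relation.Comp (Relation.ReflTransGen α) β s u → β s u := by
  rintro u ⟨t, hst, hbt⟩
  induction hst with
  | refl => exact hbt
  | tail h' step ih => exact ih (h _ h' u ⟨_, step, hbt⟩)
end

section
/- Soundness of the dRL right loop refinement axiom (loop_r): let α, β be relations on states and let s be a state. If the composition α;β refines α at s (i.e., ∀ u, (Relation.Comp α β) s u → α s u), then the composition α;β* refines α at s, i.e., ∀ u, (Relation.Comp α (Relation.ReflTransGen β)) s u → α s u. -/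
theorem drl_loop_right_sound {V : Type*}
    (α β : (V → ℝ) → (V → ℝ) → Prop) (s : V → ℝ)
    (h : ∀ u, Relation.Comp α β s u → α s u) :
    ∀ u, Relation.Comp α (Relation.ReflTransGen β) s u → α s u := by
  rintro u ⟨t, hat, hst⟩
  induction hst with
  | refl => exact hat
  | tail _ hbc ih => exact h _ ⟨_, ih, hbc⟩
end

section
/- Soundness of the dRL update axiom (:=): let V be a type of variables with decidable equality, x : V, and let e be a function from states to ℝ that does not depend on x (i.e., ∀ s r, e (Function.update s x r) = e s). Then the deterministic assignment x := e equals the composition of the nondeterministic assignment x := * with the test ?(x = e); that is, as relations on states, (fun s t => t = Function.update s x (e s)) = Relation.Comp (fun s t => ∃ r : ℝ, t = Function.update s x r) (fun s t => s = t ∧ s x = e s). -/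
theorem drl_update_axiom_sound {V : Type*} [DecidableEq V] (x : V)
    (e : (V → ℝ) → ℝ)
    (he : ∀ (s : V → ℝ) (r : ℝ), e (Function.update s x r) = e s) :
    (fun s t : V → ℝ => t = Function.update s x (e s)) =
      Relation.Comp (fun s t : V → ℝ => ∃ r : ℝ, t = Function.update s x r)
        (fun s t : V → ℝ => s = t ∧ s x = e s) := by
  funext s t
  apply propext
  constructor
  · rintro rfl
    exact ⟨_, ⟨e s, rfl⟩, rfl, by simp [he]⟩
  · rintro ⟨u, ⟨r, rfl⟩, rfl, h⟩
    simp only [Function.update_self] at h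
    rw [h, he]
end

section
/- Soundness of the dRL axiom merging a random assignment sandwiching a test (:*_merge): for any variable x and any predicate P on states, the program x := *; ?P; x := * equals the program x := *; ?(∃ y, P[y/x]); that is, as relations on states, Relation.Comp (Relation.Comp (fun s t => ∃ r : ℝ, t = Function.update s x r) (fun s t => s = t ∧ P s)) (fun s t => ∃ r : ℝ, t = Function.update s x r) = Relation.Comp (fun s t => ∃ r : ℝ, t = Function.update s x r) (fun s t => s = t ∧ ∃ r : ℝ, P (Function.update s x r)). -/
theorem drl_random_test_merge_sound {V : Type*} [DecidableEq V] (x : V)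
    (P : (V → ℝ) → Prop) :
    Relation.Comp
        (Relation.Comp (fun s t : V → ℝ => ∃ r : ℝ, t = Function.update s x r)
          (fun s t : V → ℝ => s = t ∧ P s))
        (fun s t : V → ℝ => ∃ r : ℝ, t = Function.update s x r) =
      Relation.Comp (fun s t : V → ℝ => ∃ r : ℝ, t = Function.update s x r)
        (fun s t : V → ℝ => s = t ∧ ∃ r : ℝ, P (Function.update s x r)) := by
  funext s t
  apply propext
  constructor
  · rintro ⟨u, ⟨m, ⟨r, rfl⟩, rfl, hP⟩, r', rfl⟩
    exact ⟨_, ⟨r', by simp [Function.update_idem]⟩, rfl,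
      ⟨r, by simp [Function.update_idem, hP]⟩⟩
  · rintro ⟨w, ⟨r', rfl⟩, rfl, r0, hP⟩
    exact ⟨Function.update s x r0, ⟨Function.update s x r0,
      ⟨r0, by simp [Function.update_idem]⟩, rfl, by simpa [Function.update_idem] using hP⟩,
      ⟨r', by simp [Function.update_idem]⟩⟩
end

section
/- Soundness of the dRL axiom :=*_swap (commutation of a fresh nondeterministic assignment with a program): let x be a variable and α a relation on states such that (bound effect) ∀ s t, α s t → s x = t x, and (coincidence) ∀ s t (r : ℝ), α s t ↔ α (Function.update s x r) (Function.update t x r). Then x := *; α equals α; x := * as relations on states: Relation.Comp (fun s t => ∃ r : ℝ, t = Function.update s x r) α = Relation.Comp α (fun s t => ∃ r : ℝ, t = Function.update s x r). -/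
theorem drl_random_swap_sound {V : Type*} [DecidableEq V] (x : V)
    (α : (V → ℝ) → (V → ℝ) → Prop)
    (hbound : ∀ s t, α s t → s x = t x)
    (hcoinc : ∀ s t (r : ℝ),
      α s t ↔ α (Function.update s x r) (Function.update t x r)) :
    Relation.Comp (fun s t : V → ℝ => ∃ r : ℝ, t = Function.update s x r) α =
      Relation.Comp α (fun s t : V → ℝ => ∃ r : ℝ, t = Function.update s x r) := by
  ext s t
  constructor
  · rintro ⟨u, ⟨r, rfl⟩, hα⟩
    refine ⟨Function.update t x (s x), ?_, t x, ?_⟩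
    · have h := (hcoinc _ _ (s x)).mp hα
      simpa [Function.update_idem, Function.update_eq_self] using h
    · simp [Function.update_idem, Function.update_eq_self]
  · rintro ⟨u, hα, r, rfl⟩
    exact ⟨Function.update s x r, ⟨r, rfl⟩, (hcoinc _ _ r).mp hα⟩
end

section
/- Semantic version of the auxiliary ghost lemma (Lemma C.2): let x be a variable and α a relation on states such that x is not read by α, in the sense that ∀ s t (r : ℝ), α s t → ∃ t', α (Function.update s x r) t' ∧ ∀ y ≠ x, t' y = t y. Then x := *; α; x := * equals α; x := * as relations on states: Relation.Comp (fun s t => ∃ r : ℝ, t = Function.update s x r) (Relation.Comp α (fun s t => ∃ r : ℝ, t = Function.update s x r)) = Relation.Comp α (fun s t => ∃ r : ℝ, t = Function.update s x r). -/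
theorem drl_ghost_aux_sound {V : Type*} [DecidableEq V] (x : V)
    (α : (V → ℝ) → (V → ℝ) → Prop)
    (hnotread : ∀ s t (r : ℝ), α s t →
      ∃ t', α (Function.update s x r) t' ∧ ∀ y ≠ x, t' y = t y) :
    Relation.Comp (fun s t : V → ℝ => ∃ r : ℝ, t = Function.update s x r)
        (Relation.Comp α (fun s t : V → ℝ => ∃ r : ℝ, t = Function.update s x r)) =
      Relation.Comp α (fun s t : V → ℝ => ∃ r : ℝ, t = Function.update s x r) := by
  funext s t
  apply propext
  constructor
  · rintro ⟨u, ⟨r, rfl⟩, v, hα, r', rfl⟩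
    obtain ⟨t', ht', hagree⟩ := hnotread _ _ (s x) hα
    rw [Function.update_idem, Function.update_eq_self] at ht'
    refine ⟨t', ht', r', ?_⟩
    funext y
    by_cases hy : y = x
    · subst hy; simp
    · simp [Function.update_of_ne hy, hagree y hy]
  · rintro ⟨v, hα, r, rfl⟩
    exact ⟨s, ⟨s x, (Function.update_eq_self _ _).symm⟩, v, hα, r, rfl⟩
end

section
/- Semantic version of the loop case (aux) in the proof of Lemma C.2: let x be a variable and β a relation on states such that x is not read by β, in the sense that ∀ s t (r : ℝ), β s t → ∃ t', β (Function.update s x r) t' ∧ ∀ y ≠ x, t' y = t y. Then β*; x := * equals x := *; (β; x := *)* as relations on states: Relation.Comp (Relation.ReflTransGen β) (fun s t => ∃ r : ℝ, t = Function.update s x r) = Relation.Comp (fun s t => ∃ r : ℝ, t = Function.update s x r) (Relation.ReflTransGen (Relation.Comp β (fun s t => ∃ r : ℝ, t = Function.update s x r))). -/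
theorem drl_ghost_loop_aux_sound {V : Type*} [DecidableEq V] (x : V)
    (β : (V → ℝ) → (V → ℝ) → Prop)
    (hnotread : ∀ s t (r : ℝ), β s t →
      ∃ t', β (Function.update s x r) t' ∧ ∀ y ≠ x, t' y = t y) :
    Relation.Comp (Relation.ReflTransGen β)
        (fun s t : V → ℝ => ∃ r : ℝ, t = Function.update s x r) =
      Relation.Comp (fun s t : V → ℝ => ∃ r : ℝ, t = Function.update s x r)
        (Relation.ReflTransGen
          (Relation.Comp β (fun s t : V → ℝ => ∃ r : ℝ, t = Function.update s x r))) := by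
  set rand : (V → ℝ) → (V → ℝ) → Prop :=
    fun s t : V → ℝ => ∃ r : ℝ, t = Function.update s x r with hrand
  ext s u
  constructor
  · rintro ⟨m, hsm, r, rfl⟩
    refine ⟨Function.update s x r, ⟨r, rfl⟩, ?_⟩
    -- claim: ∀ r, ReflTransGen (β;rand) (update s x r) (update m x r)
    clear hrand
    induction hsm with
    | refl => exact Relation.ReflTransGen.refl
    | tail hab hbc ih =>
        rename_i b c
        refine ih.tail ?_
        obtain ⟨t', ht', hagree⟩ := hnotread b c r hbc
        refine ⟨t', ht', r, ?_⟩
        funext y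
        by_cases hy : y = x
        · subst hy; simp
        · simp [Function.update_of_ne hy, hagree y hy]
  · rintro ⟨p, ⟨r₀, rfl⟩, hpu⟩
    -- generalize: from any state agreeing with s off x
    have key : ∀ p u : V → ℝ, Relation.ReflTransGen (Relation.Comp β rand) p u →
        ∀ s : V → ℝ, (∀ y ≠ x, p y = s y) →
        ∃ m, Relation.ReflTransGen β s m ∧ ∃ r : ℝ, u = Function.update m x r := by
      intro p u hpu
      induction hpu with
      | refl =>
          intro s hsp
          refine ⟨s, Relation.ReflTransGen.refl, p x, ?_⟩
          funext y
          by_cases hy : y = x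
          · subst hy; simp
          · simp [Function.update_of_ne hy, hsp y hy]
      | tail hab hbc ih =>
          rename_i b c
          intro s hsp
          obtain ⟨m, hsm, r, rfl⟩ := ih s hsp
          obtain ⟨t, hmt, rq, rfl⟩ := hbc
          obtain ⟨t', ht', hagree⟩ := hnotread (Function.update m x r) t (m x) hmt
          have hs : Function.update (Function.update m x r) x (m x) = m := by
            funext y
            by_cases hy : y = x
            · subst hy; simp
            · simp [Function.update_of_ne hy]
          rw [hs] at ht'
          refine ⟨t', hsm.tail ht', rq, ?_⟩
          funext y
          by_cases hy : y = x
          · subst hy; simp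
          · simp [Function.update_of_ne hy, hagree y hy]
    obtain ⟨m, hsm, r, rfl⟩ := key _ _ hpu s (by intro y hy; simp [Function.update_of_ne hy])
    exact ⟨m, hsm, r, rfl⟩
end

section
/- Semantic version of Theorem 3 (freshness/ghost theorem): let x be a variable and let C be a single-hole program context built inductively from the hole, constant relations γ for which x is semantically fresh (i.e., ∀ s t, γ s t → s x = t x, and ∀ s t r, γ s t ↔ γ (Function.update s x r) (Function.update t x r)), sequential composition (on either side), nondeterministic choice (union, on either side), and loop (reflexive-transitive closure). Let α be a relation such that x is not read by α, in the sense that ∀ s t (r : ℝ), α s t → ∃ t', α (Function.update s x r) t' ∧ ∀ y ≠ x, t' y = t y. Then, writing ρ for the nondeterministic assignment x := *, the relations C(α); ρ and C(α; ρ); ρ are equal: Relation.Comp (C α) ρ = Relation.Comp (C (Relation.Comp α ρ)) ρ. -/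
/-- A single-hole program context on binary relations over states
(V → ℝ), all of whose fixed (constant) relations are semantically fresh for the
variable `x`: they neither write `x` (bound effect) nor read `x` (coincidence).
The contexts are generated by: the hole, composition with such a fixed relation
on either side, union with such a fixed relation on either side, and the
reflexive-transitive closure (loop) of a context. -/
inductive IsFreshCtx {V : Type*} [DecidableEq V] (x : V) :
    ((((V → ℝ) → (V → ℝ) → Prop)) → ((V → ℝ) → (V → ℝ) → Prop)) → Prop
  | hole : IsFreshCtx x (fun α => α)
  | compL (γ : (V → ℝ) → (V → ℝ) → Prop)
      (hw : ∀ s t, γ s t → s x = t x)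
      (hr : ∀ s t (r : ℝ), γ s t ↔ γ (Function.update s x r) (Function.update t x r))
      {C} (hC : IsFreshCtx x C) :
      IsFreshCtx x (fun α => Relation.Comp γ (C α))
  | compR (γ : (V → ℝ) → (V → ℝ) → Prop)
      (hw : ∀ s t, γ s t → s x = t x)
      (hr : ∀ s t (r : ℝ), γ s t ↔ γ (Function.update s x r) (Function.update t x r))
      {C} (hC : IsFreshCtx x C) :
      IsFreshCtx x (fun α => Relation.Comp (C α) γ)
  | unionL (γ : (V → ℝ) → (V → ℝ) → Prop)
      (hw : ∀ s t, γ s t → s x = t x)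
      (hr : ∀ s t (r : ℝ), γ s t ↔ γ (Function.update s x r) (Function.update t x r))
      {C} (hC : IsFreshCtx x C) :
      IsFreshCtx x (fun α s t => γ s t ∨ C α s t)
  | unionR (γ : (V → ℝ) → (V → ℝ) → Prop)
      (hw : ∀ s t, γ s t → s x = t x)
      (hr : ∀ s t (r : ℝ), γ s t ↔ γ (Function.update s x r) (Function.update t x r))
      {C} (hC : IsFreshCtx x C) :
      IsFreshCtx x (fun α s t => C α s t ∨ γ s t)
  | star {C} (hC : IsFreshCtx x C) :
      IsFreshCtx x (fun α => Relation.ReflTransGen (C α))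

private lemma eq_update_of_agree {V : Type*} [DecidableEq V] (x : V) {s s' : V → ℝ}
    (h : ∀ y ≠ x, s' y = s y) : s' = Function.update s x (s' x) := by
  funext y
  by_cases hy : y = x
  · subst hy; simp
  · simp [Function.update_of_ne hy, h y hy]

private lemma ctx_sim {V : Type*} [DecidableEq V] (x : V)
    {C : (((V → ℝ) → (V → ℝ) → Prop)) → ((V → ℝ) → (V → ℝ) → Prop)}
    (hC : IsFreshCtx x C)
    (β β' : (V → ℝ) → (V → ℝ) → Prop)
    (hsim : ∀ s s' t, (∀ y ≠ x, s' y = s y) → β s t →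
      ∃ t', β' s' t' ∧ ∀ y ≠ x, t' y = t y) :
    ∀ s s' t, (∀ y ≠ x, s' y = s y) → C β s t →
      ∃ t', C β' s' t' ∧ ∀ y ≠ x, t' y = t y := by
  induction hC with
  | hole => exact hsim
  | compL γ hw hr hC ih =>
      rintro s s' t hs ⟨u, hγ, hc⟩
      have hγ' : γ s' (Function.update u x (s' x)) := by
        have := (hr s u (s' x)).1 hγ
        rwa [← eq_update_of_agree x hs] at this
      obtain ⟨t', ht', hagree⟩ := ih _ (Function.update u x (s' x)) t
        (fun y hy => Function.update_of_ne hy _ _) hc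
      exact ⟨t', ⟨_, hγ', ht'⟩, hagree⟩
  | compR γ hw hr hC ih =>
      rintro s s' t hs ⟨u, hc, hγ⟩
      obtain ⟨u', hu', hag⟩ := ih s s' u hs hc
      have hγ' : γ u' (Function.update t x (u' x)) := by
        have := (hr u t (u' x)).1 hγ
        rwa [← eq_update_of_agree x hag] at this
      exact ⟨Function.update t x (u' x), ⟨u', hu', hγ'⟩,
        fun y hy => Function.update_of_ne hy _ _⟩
  | unionL γ hw hr hC ih =>
      rintro s s' t hs (hγ | hc)
      · have hγ' : γ s' (Function.update t x (s' x)) := by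
          have := (hr s t (s' x)).1 hγ
          rwa [← eq_update_of_agree x hs] at this
        exact ⟨Function.update t x (s' x), Or.inl hγ',
          fun y hy => Function.update_of_ne hy _ _⟩
      · obtain ⟨t', ht', hagree⟩ := ih s s' t hs hc
        exact ⟨t', Or.inr ht', hagree⟩
  | unionR γ hw hr hC ih =>
      rintro s s' t hs (hc | hγ)
      · obtain ⟨t', ht', hagree⟩ := ih s s' t hs hc
        exact ⟨t', Or.inl ht', hagree⟩
      · have hγ' : γ s' (Function.update t x (s' x)) := by
          have := (hr s t (s' x)).1 hγ
          rwa [← eq_update_of_agree x hs] at this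
        exact ⟨Function.update t x (s' x), Or.inr hγ',
          fun y hy => Function.update_of_ne hy _ _⟩
  | star hC ih =>
      rintro s s' t hs h
      induction h generalizing s' with
      | refl => exact ⟨s', Relation.ReflTransGen.refl, hs⟩
      | tail hab hbc ih2 =>
          obtain ⟨b', hb', hagb⟩ := ih2 s' hs
          obtain ⟨t', ht', hagt⟩ := ih _ b' _ hagb hbc
          exact ⟨t', hb'.tail ht', hagt⟩

theorem drl_fresh_ghost_theorem {V : Type*} [DecidableEq V] (x : V)
    (C : (((V → ℝ) → (V → ℝ) → Prop)) → ((V → ℝ) → (V → ℝ) → Prop))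
    (hC : IsFreshCtx x C)
    (α : (V → ℝ) → (V → ℝ) → Prop)
    (hα : ∀ s t (r : ℝ), α s t →
      ∃ t', α (Function.update s x r) t' ∧ ∀ y ≠ x, t' y = t y) :
    Relation.Comp (C α) (fun s t : V → ℝ => ∃ r : ℝ, t = Function.update s x r) =
      Relation.Comp
        (C (Relation.Comp α (fun s t : V → ℝ => ∃ r : ℝ, t = Function.update s x r)))
        (fun s t : V → ℝ => ∃ r : ℝ, t = Function.update s x r) := by
  set ρ : (V → ℝ) → (V → ℝ) → Prop := fun s t => ∃ r : ℝ, t = Function.update s x r with hρ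
  have key : ∀ {u u' : V → ℝ} (r : ℝ), (∀ y ≠ x, u' y = u y) →
      Function.update u x r = Function.update u' x r := by
    intro u u' r h
    funext y
    by_cases hy : y = x
    · subst hy; simp
    · simp [Function.update_of_ne hy, h y hy]
  ext s t
  constructor
  · rintro ⟨u, hc, r, rfl⟩
    have hsim : ∀ s s' t, (∀ y ≠ x, s' y = s y) → α s t →
        ∃ t', Relation.Comp α ρ s' t' ∧ ∀ y ≠ x, t' y = t y := by
      intro s s' t hs hα'
      obtain ⟨t', ht', hag⟩ := hα s t (s' x) hα'
      rw [eq_update_of_agree x hs]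
      refine ⟨Function.update t' x (t x), ⟨t', ht', t x, rfl⟩, ?_⟩
      intro y hy
      rw [Function.update_of_ne hy, hag y hy]
    obtain ⟨u', hu', hag⟩ := ctx_sim x hC α _ hsim s s u (fun _ _ => rfl) hc
    exact ⟨u', hu', r, key r hag⟩
  · rintro ⟨u, hc, r, rfl⟩
    have hsim : ∀ s s' t, (∀ y ≠ x, s' y = s y) → Relation.Comp α ρ s t →
        ∃ t', α s' t' ∧ ∀ y ≠ x, t' y = t y := by
      rintro s s' t hs ⟨v, hv, c, rfl⟩
      obtain ⟨t', ht', hag⟩ := hα s v (s' x) hv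
      rw [eq_update_of_agree x hs]
      refine ⟨t', ht', ?_⟩
      intro y hy
      rw [hag y hy, Function.update_of_ne hy]
    obtain ⟨u', hu', hag⟩ := ctx_sim x hC _ α hsim s s u (fun _ _ => rfl) hc
    exact ⟨u', hu', r, key r hag⟩
end

section
/- Semantic version of the loop case of Lemma 2 (local refinement under a loop with a projective context): let α, β, δ be relations on states and s a state. If for every state t reachable from s by the loop (α;δ)* the relation α refines β at t (i.e., ∀ t, Relation.ReflTransGen (Relation.Comp α δ) s t → ∀ u, α t u → β t u), then the loop (α;δ)* refines the loop (β;δ)* at s: ∀ u, Relation.ReflTransGen (Relation.Comp α δ) s u → Relation.ReflTransGen (Relation.Comp β δ) s u. -/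
theorem drl_local_loop_refinement_sound {V : Type*}
    (α β δ : (V → ℝ) → (V → ℝ) → Prop) (s : V → ℝ)
    (h : ∀ t, Relation.ReflTransGen (Relation.Comp α δ) s t → ∀ u, α t u → β t u) :
    ∀ u, Relation.ReflTransGen (Relation.Comp α δ) s u →
      Relation.ReflTransGen (Relation.Comp β δ) s u := by
  intro u hu
  induction hu with
  | refl => exact Relation.ReflTransGen.refl
  | tail hab hbc ih =>
    rename_i b c
    obtain ⟨m, hαm, hδm⟩ := hbc
    exact ih.tail ⟨m, h b hab m hαm, hδm⟩
end

section
/- Core analytic fact underlying the soundness of the differential ghost axiom ≡_dG (Lemma 3): for any continuous functions a, b : ℝ → ℝ, any t₀ : ℝ, and any initial value x₀ : ℝ, there exists a function x : ℝ → ℝ with x t₀ = x₀ such that for every t : ℝ, x has derivative a t * x t + b t at t (HasDerivAt x (a t * x t + b t) t); i.e., the linear differential equation x' = a(t)·x + b(t) has a global solution through any initial condition. -/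
theorem linear_ode_global_solution (a b : ℝ → ℝ)
    (ha : Continuous a) (hb : Continuous b) (t₀ x₀ : ℝ) :
    ∃ x : ℝ → ℝ, x t₀ = x₀ ∧ ∀ t : ℝ, HasDerivAt x (a t * x t + b t) t := by
  set A : ℝ → ℝ := fun t => ∫ s in t₀..t, a s with hAdef
  have hA' : ∀ t, HasDerivAt A (a t) t := fun t =>
    intervalIntegral.integral_hasDerivAt_right (ha.intervalIntegrable t₀ t)
      (ha.stronglyMeasurableAtFilter _ _) ha.continuousAt
  have hAcont : Continuous A := by
    apply continuous_iff_continuousAt.2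
    exact fun t => (hA' t).continuousAt
  have hg : Continuous fun s => Real.exp (-A s) * b s :=
    ((hAcont.neg).rexp).mul hb
  set B : ℝ → ℝ := fun t => ∫ s in t₀..t, Real.exp (-A s) * b s with hBdef
  have hB' : ∀ t, HasDerivAt B (Real.exp (-A t) * b t) t := fun t =>
    intervalIntegral.integral_hasDerivAt_right (hg.intervalIntegrable t₀ t)
      (hg.stronglyMeasurableAtFilter _ _) hg.continuousAt
  refine ⟨fun t => Real.exp (A t) * (x₀ + B t), by simp [hAdef, hBdef], fun t => ?_⟩
  have h1 : HasDerivAt (fun t => Real.exp (A t)) (Real.exp (A t) * a t) t :=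
    (Real.hasDerivAt_exp (A t)).comp t (hA' t)
  have h2 : HasDerivAt (fun t => x₀ + B t) (Real.exp (-A t) * b t) t :=
    (hB' t).const_add x₀
  have := h1.mul h2
  convert this using 1
  · rfl
  · rfl
  · rfl
  rw [Real.exp_neg]
  field_simp
end
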